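/- Let f, g : ℝ → ℂ be measurable functions vanishing at infinity (with finite distribution functions), and let f*, g* denote their nonincreasing rearrangements on (0,∞). Then for 1 ≤ p < ∞, ∫_0^∞ |f*(t) − g*(t)|^p dt ≤ ∫_ℝ |f(x) − g(x)|^p dx (nonexpansivity of the rearrangement in L^p). -/

import Mathlib

open MeasureTheory Set Filter Topology
open scoped ENNReal

namespace Stmt17

noncomputable def distf (φ : ℝ → ℝ) (y : ℝ) : ℝ≥0∞ := volume {x | y < φ x}

noncomputable def Tinf (φ : ℝ → ℝ) : ℝ≥0∞ := ⨅ (y : ℝ) (_ : 0 < y), distf φ y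

def RS (φ : ℝ → ℝ) (t : ℝ) : Set ℝ :=
  {y : ℝ | ∃ E : Set ℝ, volume E = ENNReal.ofReal t ∧ y = ⨅ x : E, φ x.1}

noncomputable def rearr (φ : ℝ → ℝ) (t : ℝ) : ℝ := sSup (RS φ t)

lemma distf_antitone {φ : ℝ → ℝ} : Antitone (distf φ) := by
  intro a b hab
  exact measure_mono (fun x hx => lt_of_le_of_lt hab hx)

lemma Tinf_le {φ : ℝ → ℝ} {y : ℝ} (hy : 0 < y) : Tinf φ ≤ distf φ y :=
  iInf_le_of_le y (iInf_le _ hy)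

lemma Tinf_lt_iff {φ : ℝ → ℝ} {c : ℝ≥0∞} :
    Tinf φ < c ↔ ∃ y, 0 < y ∧ distf φ y < c := by
  simp [Tinf, iInf_lt_iff]

lemma exists_subset_volume_eq {s : Set ℝ} (hs : MeasurableSet s) (hfin : volume s ≠ ⊤)
    {r : ℝ≥0∞} (hr : r ≤ volume s) : ∃ E, E ⊆ s ∧ volume E = r := by
  by_cases hr0 : r = 0
  · exact ⟨∅, empty_subset s, by simp [hr0]⟩
  by_cases hrs : r = volume s
  · exact ⟨s, subset_rfl, hrs.symm⟩
  have hrlt : r < volume s := lt_of_le_of_ne hr hrs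
  have hrne : r ≠ ⊤ := ne_top_of_lt (lt_of_le_of_lt hr (lt_top_iff_ne_top.2 hfin))
  set y : ℝ := r.toReal with hy
  have hy0 : 0 < y := ENNReal.toReal_pos hr0 hrne
  have hylt : y < (volume s).toReal := ENNReal.toReal_strict_mono hfin hrlt
  set F : ℝ → ℝ := fun c => (volume (s ∩ Iic c)).toReal with hF
  have hFfin : ∀ c, volume (s ∩ Iic c) ≠ ⊤ :=
    fun c => ne_top_of_le_ne_top hfin (measure_mono inter_subset_left)
  have hkey : ∀ c c' : ℝ, c ≤ c' → F c' ≤ F c + (c' - c) := by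
    intro c c' hcc
    have h1 : volume (s ∩ Iic c') ≤ volume (s ∩ Iic c) + ENNReal.ofReal (c' - c) := by
      have hsub : s ∩ Iic c' ⊆ (s ∩ Iic c) ∪ Ioc c c' := by
        rintro x ⟨hxs, hxc⟩
        by_cases h : x ≤ c
        · exact Or.inl ⟨hxs, h⟩
        · exact Or.inr ⟨not_le.1 h, hxc⟩
      calc volume (s ∩ Iic c') ≤ volume ((s ∩ Iic c) ∪ Ioc c c') := measure_mono hsub
        _ ≤ volume (s ∩ Iic c) + volume (Ioc c c') := measure_union_le _ _
        _ = volume (s ∩ Iic c) + ENNReal.ofReal (c' - c) := by rw [Real.volume_Ioc]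
    calc F c' ≤ (volume (s ∩ Iic c) + ENNReal.ofReal (c' - c)).toReal :=
          ENNReal.toReal_mono (ENNReal.add_ne_top.2 ⟨hFfin c, ENNReal.ofReal_ne_top⟩) h1
      _ = F c + (c' - c) := by
          rw [ENNReal.toReal_add (hFfin c) ENNReal.ofReal_ne_top,
            ENNReal.toReal_ofReal (by linarith)]
  have hmono : Monotone F := fun c c' h =>
    ENNReal.toReal_mono (hFfin c') (measure_mono (inter_subset_inter_right _ (Iic_subset_Iic.2 h)))
  have hcont : Continuous F := by
    refine (LipschitzWith.of_dist_le_mul (K := 1) fun c c' => ?_).continuous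
    simp only [NNReal.coe_one, one_mul]
    rcases le_total c c' with h | h
    · rw [Real.dist_eq, Real.dist_eq, abs_sub_comm, abs_of_nonneg (sub_nonneg.2 (hmono h)),
        abs_of_nonpos (by linarith)]
      have := hkey c c' h
      linarith
    · rw [Real.dist_eq, Real.dist_eq, abs_of_nonneg (sub_nonneg.2 (hmono h)),
        abs_of_nonneg (by linarith)]
      have := hkey c' c h
      linarith
  have htop : Tendsto (fun n : ℕ => F n) atTop (𝓝 (volume s).toReal) := by
    have h1 : Tendsto (fun n : ℕ => volume (s ∩ Iic (n : ℝ))) atTop (𝓝 (volume s)) := by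
      have hU : (⋃ n : ℕ, s ∩ Iic (n : ℝ)) = s := by
        ext x
        simp only [mem_iUnion, mem_inter_iff, mem_Iic]
        constructor
        · rintro ⟨n, hx, _⟩; exact hx
        · intro hx
          obtain ⟨n, hn⟩ := exists_nat_ge x
          exact ⟨n, hx, hn⟩
      have := tendsto_measure_iUnion_atTop (μ := volume)
        (s := fun n : ℕ => s ∩ Iic (n : ℝ))
        (fun a b hab => inter_subset_inter_right _ (Iic_subset_Iic.2 (Nat.cast_le.2 hab)))
      rwa [hU] at this
    exact (ENNReal.tendsto_toReal hfin).comp h1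
  have hbot : Tendsto (fun n : ℕ => F (-(n : ℝ))) atTop (𝓝 0) := by
    have h1 : Tendsto (fun n : ℕ => volume (s ∩ Iic (-(n : ℝ)))) atTop (𝓝 0) := by
      have hI : (⋂ n : ℕ, s ∩ Iic (-(n : ℝ))) = ∅ := by
        ext x
        simp only [mem_iInter, mem_inter_iff, mem_Iic, mem_empty_iff_false, iff_false, not_forall]
        obtain ⟨n, hn⟩ := exists_nat_gt (-x)
        exact ⟨n, fun h => absurd h.2 (by linarith)⟩
      have := tendsto_measure_iInter_atTop (μ := volume)
        (s := fun n : ℕ => s ∩ Iic (-(n : ℝ)))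
        (fun n => ((hs.inter measurableSet_Iic).nullMeasurableSet))
        (fun a b hab => inter_subset_inter_right _ (Iic_subset_Iic.2 (by
          simp only [neg_le_neg_iff, Nat.cast_le]; exact hab)))
        ⟨0, ne_top_of_le_ne_top hfin (measure_mono inter_subset_left)⟩
      rwa [hI, measure_empty] at this
    rw [show (0:ℝ) = (0:ℝ≥0∞).toReal by simp]
    exact (ENNReal.tendsto_toReal (by simp)).comp h1
  obtain ⟨na, hna⟩ := (hbot.eventually (eventually_lt_nhds hy0)).exists
  obtain ⟨nb, hnb⟩ := (htop.eventually (eventually_gt_nhds hylt)).exists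
  have hab : -(na : ℝ) ≤ (nb : ℝ) := by
    by_contra h
    exact absurd (hmono (le_of_lt (not_le.1 h))) (by simp only [not_le]; linarith)
  obtain ⟨c, _, hc⟩ := intermediate_value_Icc hab hcont.continuousOn ⟨hna.le, hnb.le⟩
  refine ⟨s ∩ Iic c, inter_subset_left, ?_⟩
  have : ENNReal.ofReal (F c) = ENNReal.ofReal y := by rw [hc]
  rwa [hF, ENNReal.ofReal_toReal (hFfin c), hy, ENNReal.ofReal_toReal hrne] at this


section Rearr

variable {φ : ℝ → ℝ}

lemma iInf_mem_le {E : Set ℝ} (hpos : ∀ x, 0 ≤ φ x) {x₀ : ℝ} (hx₀ : x₀ ∈ E) :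
    (⨅ x : E, φ x.1) ≤ φ x₀ :=
  ciInf_le ⟨0, by rintro _ ⟨x, rfl⟩; exact hpos _⟩ (⟨x₀, hx₀⟩ : E)

lemma rearr_nonneg (hpos : ∀ x, 0 ≤ φ x) (t : ℝ) : 0 ≤ rearr φ t := by
  rcases eq_empty_or_nonempty (RS φ t) with h | h
  · rw [rearr, h, Real.sSup_empty]
  by_cases hb : BddAbove (RS φ t)
  · obtain ⟨y, hy⟩ := h
    obtain ⟨E, _, rfl⟩ := hy
    exact le_trans (Real.iInf_nonneg fun x => hpos _) (le_csSup hb ⟨E, ‹_›, rfl⟩)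
  · rw [rearr, Real.sSup_of_not_bddAbove hb]

lemma exists_mem_RS (hmφ : Measurable φ) {t u' : ℝ} (ht : 0 < t) (hu' : 0 < u')
    (hfin' : distf φ u' ≠ ⊤) (hle : ENNReal.ofReal t ≤ distf φ u') :
    ∃ y ∈ RS φ t, u' ≤ y := by
  obtain ⟨E, hEsub, hEvol⟩ :=
    exists_subset_volume_eq (measurableSet_lt measurable_const hmφ) hfin' hle
  have hEne : E.Nonempty := by
    apply nonempty_of_measure_ne_zero (μ := volume)
    rw [hEvol]
    simp [ENNReal.ofReal_eq_zero, not_le, ht]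
  haveI : Nonempty E := hEne.to_subtype
  refine ⟨⨅ x : E, φ x.1, ⟨E, hEvol, rfl⟩, le_ciInf fun x => (hEsub x.2).le⟩

lemma lt_rearr_iff (hmφ : Measurable φ) (hpos : ∀ x, 0 ≤ φ x)
    (hfin : ∀ y, 0 < y → distf φ y < ⊤) {t u : ℝ} (ht : 0 < t) (hu : 0 < u) :
    u < rearr φ t ↔ Tinf φ < ENNReal.ofReal t ∧ ∃ u', u < u' ∧ ENNReal.ofReal t ≤ distf φ u' := by
  constructor
  · intro h
    have hb : BddAbove (RS φ t) := by
      by_contra hb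
      rw [rearr, Real.sSup_of_not_bddAbove hb] at h
      exact absurd h (not_lt.2 hu.le)
    have hne : (RS φ t).Nonempty := by
      rcases eq_empty_or_nonempty (RS φ t) with he | hne
      · rw [rearr, he, Real.sSup_empty] at h
        exact absurd h (not_lt.2 hu.le)
      · exact hne
    obtain ⟨y, hyRS, huy⟩ := exists_lt_of_lt_csSup hne h
    obtain ⟨E, hEvol, rfl⟩ := hyRS
    set y := ⨅ x : E, φ x.1 with hydef
    refine ⟨?_, (u + y) / 2, by linarith, ?_⟩
    · by_contra hT
      push_neg at hT
      have hall : ∀ z : ℝ, 0 < z → ENNReal.ofReal t ≤ distf φ z := fun z hz =>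
        le_trans (le_trans hT (Tinf_le hz)) le_rfl
      obtain ⟨M, hM⟩ := hb
      set z := max M 0 + 1 with hz
      have hz0 : 0 < z := by positivity
      obtain ⟨y', hy'RS, hy'⟩ := exists_mem_RS hmφ ht hz0 (hfin z hz0).ne (hall z hz0)
      have := hM hy'RS
      have : M ≤ max M 0 := le_max_left _ _
      linarith
    · have hsub : E ⊆ {x | (u + y) / 2 < φ x} := by
        intro x hx
        have := iInf_mem_le hpos hx
        simp only [mem_setOf_eq]
        linarith
      rw [← hEvol]
      exact measure_mono hsub
  · rintro ⟨hT, u', huu', hle⟩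
    obtain ⟨y₀, hy₀pos, hy₀⟩ := Tinf_lt_iff.1 hT
    have hb : BddAbove (RS φ t) := by
      refine ⟨y₀, ?_⟩
      rintro y ⟨E, hEvol, rfl⟩
      by_contra hgt
      push_neg at hgt
      have hsub : E ⊆ {x | y₀ < φ x} := by
        intro x hx
        have := iInf_mem_le hpos hx
        simp only [mem_setOf_eq]
        linarith
      have : ENNReal.ofReal t ≤ distf φ y₀ := hEvol ▸ measure_mono hsub
      exact absurd hy₀ (not_lt.2 this)
    have hu' : 0 < u' := hu.trans huu'
    obtain ⟨y, hyRS, hy⟩ := exists_mem_RS hmφ ht hu' (hfin u' hu').ne hle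
    exact huu'.trans_le (hy.trans (le_csSup hb hyRS))

lemma distf_iSup (u : ℝ) : distf φ u = ⨆ n : ℕ, distf φ (u + 1 / (n + 1)) := by
  have hset : {x | u < φ x} = ⋃ n : ℕ, {x | u + 1 / ((n : ℝ) + 1) < φ x} := by
    ext x
    simp only [mem_setOf_eq, mem_iUnion]
    constructor
    · intro hx
      obtain ⟨n, hn⟩ := exists_nat_one_div_lt (show (0:ℝ) < φ x - u by linarith)
      exact ⟨n, by linarith⟩
    · rintro ⟨n, hn⟩
      have : (0:ℝ) < 1 / ((n:ℝ) + 1) := by positivity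
      linarith
  have hdir : Directed (· ⊆ ·) (fun n : ℕ => {x | u + 1 / ((n : ℝ) + 1) < φ x}) := by
    apply Monotone.directed_le
    intro a b hab x hx
    simp only [mem_setOf_eq] at hx ⊢
    have hab' : (a:ℝ) ≤ b := Nat.cast_le.mpr hab
    have h1 : 1 / ((b:ℝ) + 1) ≤ 1 / ((a:ℝ) + 1) := by
      apply one_div_le_one_div_of_le (by positivity)
      linarith
    linarith
  rw [distf, hset, hdir.measure_iUnion]
  rfl

lemma superlevel_subset (hmφ : Measurable φ) (hpos : ∀ x, 0 ≤ φ x)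
    (hfin : ∀ y, 0 < y → distf φ y < ⊤) {u : ℝ} (hu : 0 < u) :
    {t | t ∈ Ioi (0:ℝ) ∧ u < rearr φ t} ⊆ Ioc (Tinf φ).toReal ((distf φ u).toReal) := by
  rintro t ⟨ht, hlt⟩
  obtain ⟨hT, u', huu', hle⟩ := (lt_rearr_iff hmφ hpos hfin ht hu).1 hlt
  have h1 : distf φ u ≠ ⊤ := (hfin u hu).ne
  have hTne : Tinf φ ≠ ⊤ := ne_top_of_le_ne_top h1 (Tinf_le hu)
  constructor
  · exact (ENNReal.lt_ofReal_iff_toReal_lt hTne).1 hT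
  · have : ENNReal.ofReal t ≤ distf φ u := hle.trans (distf_antitone huu'.le)
    exact (ENNReal.ofReal_le_iff_le_toReal h1).1 this

lemma subset_superlevel (hmφ : Measurable φ) (hpos : ∀ x, 0 ≤ φ x)
    (hfin : ∀ y, 0 < y → distf φ y < ⊤) {u : ℝ} (hu : 0 < u) :
    Ioo (Tinf φ).toReal ((distf φ u).toReal) ⊆ {t | t ∈ Ioi (0:ℝ) ∧ u < rearr φ t} := by
  rintro t ⟨h1, h2⟩
  have ht : 0 < t := lt_of_le_of_lt ENNReal.toReal_nonneg h1
  have h1' : distf φ u ≠ ⊤ := (hfin u hu).ne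
  have hTne : Tinf φ ≠ ⊤ := ne_top_of_le_ne_top h1' (Tinf_le hu)
  refine ⟨ht, (lt_rearr_iff hmφ hpos hfin ht hu).2 ⟨?_, ?_⟩⟩
  · exact (ENNReal.lt_ofReal_iff_toReal_lt hTne).2 h1
  · have hlt : ENNReal.ofReal t < distf φ u :=
      (ENNReal.ofReal_lt_iff_lt_toReal ht.le h1').2 h2
    rw [distf_iSup u] at hlt
    obtain ⟨n, hn⟩ := lt_iSup_iff.1 hlt
    have hpos' : (0:ℝ) < 1 / ((n:ℝ) + 1) := by positivity
    exact ⟨u + 1 / ((n : ℝ) + 1), by linarith, hn.le⟩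

lemma measurableSet_superlevel (hmφ : Measurable φ) (hpos : ∀ x, 0 ≤ φ x)
    (hfin : ∀ y, 0 < y → distf φ y < ⊤) {u : ℝ} (hu : 0 < u) :
    MeasurableSet {t | t ∈ Ioi (0:ℝ) ∧ u < rearr φ t} := by
  set S := {t | t ∈ Ioi (0:ℝ) ∧ u < rearr φ t} with hS
  have h₁ := subset_superlevel hmφ hpos hfin hu
  have h₂ := superlevel_subset hmφ hpos hfin hu
  have hdecomp : S = Ioo (Tinf φ).toReal ((distf φ u).toReal) ∪
      (S \ Ioo (Tinf φ).toReal ((distf φ u).toReal)) := (union_diff_cancel h₁).symm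
  rw [hdecomp]
  refine measurableSet_Ioo.union (Set.Subsingleton.measurableSet ?_)
  intro a ha b hb
  have ha' : a = (distf φ u).toReal := by
    obtain ⟨haS, haN⟩ := ha
    obtain ⟨hal, har⟩ := h₂ haS
    rcases eq_or_lt_of_le har with h | h
    · exact h
    · exact absurd ⟨hal, h⟩ haN
  have hb' : b = (distf φ u).toReal := by
    obtain ⟨hbS, hbN⟩ := hb
    obtain ⟨hbl, hbr⟩ := h₂ hbS
    rcases eq_or_lt_of_le hbr with h | h
    · exact h
    · exact absurd ⟨hbl, h⟩ hbN
  rw [ha', hb']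

lemma rearr_indicator_measurable (hmφ : Measurable φ) (hpos : ∀ x, 0 ≤ φ x)
    (hfin : ∀ y, 0 < y → distf φ y < ⊤) :
    Measurable ((Ioi (0:ℝ)).indicator (rearr φ)) := by
  apply measurable_of_Ioi
  intro u
  rcases lt_trichotomy u 0 with hu | hu | hu
  · have : (Ioi (0:ℝ)).indicator (rearr φ) ⁻¹' Ioi u = univ := by
      ext t
      simp only [mem_preimage, mem_Ioi, mem_univ, iff_true]
      refine lt_of_lt_of_le hu ?_
      exact indicator_nonneg (fun x _ => rearr_nonneg hpos x) t
    rw [this]; exact MeasurableSet.univ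
  · have : (Ioi (0:ℝ)).indicator (rearr φ) ⁻¹' Ioi u =
        ⋃ n : ℕ, {t | t ∈ Ioi (0:ℝ) ∧ 1 / ((n:ℝ) + 1) < rearr φ t} := by
      ext t
      simp only [mem_preimage, mem_Ioi, mem_iUnion, mem_setOf_eq, hu]
      constructor
      · intro h
        by_cases ht : t ∈ Ioi (0:ℝ)
        · rw [indicator_of_mem ht] at h
          obtain ⟨n, hn⟩ := exists_nat_one_div_lt h
          exact ⟨n, ht, hn⟩
        · rw [indicator_of_notMem ht] at h
          exact absurd h (lt_irrefl 0)
      · rintro ⟨n, ht, hn⟩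
        rw [indicator_of_mem (show t ∈ Ioi (0:ℝ) from ht)]
        have : (0:ℝ) < 1 / ((n:ℝ) + 1) := by positivity
        linarith
    rw [this]
    exact MeasurableSet.iUnion fun n =>
      measurableSet_superlevel hmφ hpos hfin (by positivity)
  · have : (Ioi (0:ℝ)).indicator (rearr φ) ⁻¹' Ioi u =
        {t | t ∈ Ioi (0:ℝ) ∧ u < rearr φ t} := by
      ext t
      simp only [mem_preimage, mem_Ioi, mem_setOf_eq]
      by_cases ht : t ∈ Ioi (0:ℝ)
      · rw [indicator_of_mem ht]
        exact ⟨fun h => ⟨ht, h⟩, fun h => h.2⟩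
      · rw [indicator_of_notMem ht]
        exact ⟨fun h => absurd (hu.trans h) (lt_irrefl 0), fun h => absurd h.1 ht⟩
    rw [this]
    exact measurableSet_superlevel hmφ hpos hfin hu

end Rearr


section Crux

lemma crux {φ ψ : ℝ → ℝ} (hmφ : Measurable φ) (hmψ : Measurable ψ)
    (hposφ : ∀ x, 0 ≤ φ x) (hposψ : ∀ x, 0 ≤ ψ x)
    (hfinφ : ∀ y, 0 < y → distf φ y < ⊤) (hfinψ : ∀ y, 0 < y → distf ψ y < ⊤)
    (hT : Tinf φ = Tinf ψ) {u v : ℝ} (hv : 0 < v) (hvu : v ≤ u) :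
    volume {t | t ∈ Ioi (0:ℝ) ∧ (u < rearr φ t ∧ rearr ψ t ≤ v)}
      ≤ volume {x | u < φ x ∧ ψ x ≤ v} := by
  have hu : 0 < u := hv.trans_le hvu
  set a' := (distf φ u).toReal with ha'
  set b' := (distf ψ v).toReal with hb'
  have step1 : {t | t ∈ Ioi (0:ℝ) ∧ (u < rearr φ t ∧ rearr ψ t ≤ v)} ⊆ Icc b' a' := by
    rintro t ⟨ht, hφt, hψt⟩
    have h2 := superlevel_subset hmφ hposφ hfinφ hu ⟨ht, hφt⟩
    refine ⟨?_, h2.2⟩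
    by_contra hc
    push_neg at hc
    have hTψ : (Tinf ψ).toReal < t := by rw [← hT]; exact h2.1
    have := subset_superlevel hmψ hposψ hfinψ hv ⟨hTψ, hc⟩
    exact absurd this.2 (not_lt.2 hψt)
  have step2 : volume {t | t ∈ Ioi (0:ℝ) ∧ (u < rearr φ t ∧ rearr ψ t ≤ v)}
      ≤ ENNReal.ofReal (a' - b') := by
    refine (measure_mono step1).trans ?_
    rw [Real.volume_Icc]
  have step3 : distf φ u ≤ volume {x | u < φ x ∧ ψ x ≤ v} + distf ψ v := by
    have hsub : {x | u < φ x} ⊆ {x | u < φ x ∧ ψ x ≤ v} ∪ {x | v < ψ x} := by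
      intro x hx
      by_cases h : ψ x ≤ v
      · exact Or.inl ⟨hx, h⟩
      · exact Or.inr (not_le.1 h)
    exact (measure_mono hsub).trans (measure_union_le _ _)
  refine step2.trans ?_
  have e1 : ENNReal.ofReal (a' - b') = distf φ u - distf ψ v := by
    rw [ENNReal.ofReal_sub _ ENNReal.toReal_nonneg,
      ENNReal.ofReal_toReal (hfinφ u hu).ne, ENNReal.ofReal_toReal (hfinψ v hv).ne]
  rw [e1]
  exact tsub_le_iff_right.2 step3

lemma degen_top {p : ℝ} (hp : 1 ≤ p) {φ ψ : ℝ → ℝ} (hmφ : Measurable φ) (hmψ : Measurable ψ)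
    (hT : Tinf ψ < Tinf φ) :
    ∫⁻ x, ENNReal.ofReal (|φ x - ψ x| ^ p) = ⊤ := by
  obtain ⟨y₀, hy₀pos, hy₀⟩ := Tinf_lt_iff.1 hT
  set δ := Tinf φ - distf ψ y₀ with hδdef
  have hδ : δ ≠ 0 := by
    rw [hδdef]
    exact (tsub_pos_of_lt hy₀).ne'
  have hmint : Measurable fun x => ENNReal.ofReal (|φ x - ψ x| ^ p) :=
    (((hmφ.sub hmψ).abs.pow_const p)).ennreal_ofReal
  have key : ∀ n : ℕ, (n : ℝ≥0∞) * δ ≤ ∫⁻ x, ENNReal.ofReal (|φ x - ψ x| ^ p) := by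
    intro n
    set A := {x | (n : ℝ) + y₀ < φ x ∧ ψ x ≤ y₀} with hA
    have hAm : MeasurableSet A :=
      (measurableSet_lt measurable_const hmφ).inter (measurableSet_le hmψ measurable_const)
    have hAvol : δ ≤ volume A := by
      have hsub : {x | (n : ℝ) + y₀ < φ x} ⊆ A ∪ {x | y₀ < ψ x} := by
        intro x hx
        by_cases h : ψ x ≤ y₀
        · exact Or.inl ⟨hx, h⟩
        · exact Or.inr (not_le.1 h)
      have h1 : distf φ ((n : ℝ) + y₀) ≤ volume A + distf ψ y₀ :=
        (measure_mono hsub).trans (measure_union_le _ _)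
      have h2 : Tinf φ ≤ distf φ ((n : ℝ) + y₀) := Tinf_le (by positivity)
      exact tsub_le_iff_right.2 (h2.trans h1)
    have hpoint : ∀ x ∈ A, (n : ℝ≥0∞) ≤ ENNReal.ofReal (|φ x - ψ x| ^ p) := by
      intro x hx
      obtain ⟨hx1, hx2⟩ := hx
      have habs : (n : ℝ) ≤ |φ x - ψ x| := le_trans (by linarith) (le_abs_self _)
      rcases Nat.eq_zero_or_pos n with h0 | hpos
      · simp [h0]
      · have hn1 : (1 : ℝ) ≤ (n : ℝ) := by exact_mod_cast hpos
        have h3 : (n : ℝ) ≤ (n : ℝ) ^ p := by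
          calc (n:ℝ) = (n:ℝ) ^ (1:ℝ) := (Real.rpow_one _).symm
            _ ≤ (n:ℝ) ^ p := Real.rpow_le_rpow_of_exponent_le hn1 hp
        have h4 : (n : ℝ) ^ p ≤ |φ x - ψ x| ^ p :=
          Real.rpow_le_rpow (by positivity) habs (by linarith)
        calc (n : ℝ≥0∞) = ENNReal.ofReal (n : ℝ) := by simp
          _ ≤ ENNReal.ofReal (|φ x - ψ x| ^ p) := ENNReal.ofReal_le_ofReal (by linarith)
    calc (n : ℝ≥0∞) * δ ≤ (n : ℝ≥0∞) * volume A := mul_le_mul_right hAvol _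
      _ = ∫⁻ _ in A, (n : ℝ≥0∞) := by rw [setLIntegral_const, mul_comm]
      _ ≤ ∫⁻ x in A, ENNReal.ofReal (|φ x - ψ x| ^ p) :=
          setLIntegral_mono hmint hpoint
      _ ≤ ∫⁻ x, ENNReal.ofReal (|φ x - ψ x| ^ p) := setLIntegral_le_lintegral _ _
  have htop : (⨆ n : ℕ, (n : ℝ≥0∞) * δ) = ⊤ := by
    rw [← ENNReal.iSup_mul]
    rw [ENNReal.iSup_natCast, ENNReal.top_mul hδ]
  exact top_unique (htop ▸ iSup_le key)

end Crux


section LayerOne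

lemma lint_ind (m : Measure ℝ) {P : ℝ → Prop} [DecidablePred P] (hs : MeasurableSet {x | P x}) :
    (∫⁻ x, (if P x then (1:ℝ≥0∞) else 0) ∂m) = m {x | P x} := by
  have h : (fun x => if P x then (1:ℝ≥0∞) else 0) =
      fun x => ({x | P x}).indicator 1 x := by
    funext x
    by_cases h : P x
    · rw [if_pos h]
      exact (Set.indicator_of_mem (show x ∈ {x | P x} from h) 1).symm
    · rw [if_neg h]
      exact (Set.indicator_of_notMem (show x ∉ {x | P x} from h) 1).symm
  rw [h, lintegral_indicator_one hs]

lemma vol_inter_Ici {a b : ℝ} (ha : 0 ≤ a) :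
    volume (Ioo 0 b ∩ Ici a) = ENNReal.ofReal (b - a) := by
  rcases eq_or_lt_of_le ha with h | h
  · have h2 : Ioo 0 b ∩ Ici a = Ioo 0 b := by
      rw [← h]
      exact inter_eq_left.2 (fun x hx => hx.1.le)
    rw [h2, Real.volume_Ioo, ← h, sub_zero]
  · have h2 : Ioo 0 b ∩ Ici a = Ico a b := by
      ext u
      simp only [mem_inter_iff, mem_Ioo, mem_Ici, mem_Ico]
      constructor
      · rintro ⟨⟨_, h2⟩, h3⟩; exact ⟨h3, h2⟩
      · rintro ⟨h1, h2⟩; exact ⟨⟨lt_of_lt_of_le h h1, h2⟩, h1⟩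
    rw [h2, Real.volume_Ico]

lemma cond_set_eq {a b : ℝ} : {u : ℝ | 0 < u ∧ u < a ∧ b ≤ u} = Ioo 0 a ∩ Ici b := by
  ext u
  simp only [mem_setOf_eq, mem_inter_iff, mem_Ioo, mem_Ici]
  tauto

lemma layercake_one {a b : ℝ} (ha : 0 ≤ a) (hb : 0 ≤ b) :
    ENNReal.ofReal |a - b| =
      ∫⁻ u : ℝ, ((if 0 < u ∧ u < a ∧ b ≤ u then (1:ℝ≥0∞) else 0) +
        (if 0 < u ∧ u < b ∧ a ≤ u then (1:ℝ≥0∞) else 0)) := by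
  have hmeas : ∀ c d : ℝ, Measurable fun u : ℝ =>
      (if 0 < u ∧ u < c ∧ d ≤ u then (1:ℝ≥0∞) else 0) := by
    intro c d
    have h : MeasurableSet {u : ℝ | 0 < u ∧ u < c ∧ d ≤ u} := by
      rw [cond_set_eq]; exact measurableSet_Ioo.inter measurableSet_Ici
    exact Measurable.ite h measurable_const measurable_const
  rw [lintegral_add_left (hmeas a b)]
  have heval : ∀ c d : ℝ, 0 ≤ d →
      (∫⁻ u : ℝ, if 0 < u ∧ u < c ∧ d ≤ u then (1:ℝ≥0∞) else 0) = ENNReal.ofReal (c - d) := by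
    intro c d hd
    have hms : MeasurableSet {u : ℝ | 0 < u ∧ u < c ∧ d ≤ u} := by
      rw [cond_set_eq]; exact measurableSet_Ioo.inter measurableSet_Ici
    have h2 : volume {u : ℝ | 0 < u ∧ u < c ∧ d ≤ u} = ENNReal.ofReal (c - d) := by
      rw [cond_set_eq]; exact vol_inter_Ici hd
    exact (lint_ind volume hms).trans h2
  rw [heval a b hb, heval b a ha]
  rcases le_total b a with h | h
  · rw [abs_of_nonneg (sub_nonneg.2 h), ENNReal.ofReal_of_nonpos (sub_nonpos.2 h), add_zero]
  · rw [abs_of_nonpos (sub_nonpos.2 h), neg_sub, ENNReal.ofReal_of_nonpos (sub_nonpos.2 h),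
      zero_add]

lemma expand_one (m : Measure ℝ) [SigmaFinite m] {φ ψ : ℝ → ℝ}
    (hmφ : Measurable φ) (hmψ : Measurable ψ)
    (hposφ : ∀ x, 0 ≤ φ x) (hposψ : ∀ x, 0 ≤ ψ x) :
    ∫⁻ x, ENNReal.ofReal (|φ x - ψ x|) ∂m =
      ∫⁻ u : ℝ, ((if 0 < u then m {x | u < φ x ∧ ψ x ≤ u} else 0) +
        (if 0 < u then m {x | u < ψ x ∧ φ x ≤ u} else 0)) := by
  have hcond : ∀ (χ ρ : ℝ → ℝ) (u : ℝ), Measurable χ → Measurable ρ →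
      Measurable (fun x => if 0 < u ∧ u < χ x ∧ ρ x ≤ u then (1:ℝ≥0∞) else 0) := by
    intro χ ρ u hχ hρ
    by_cases h0 : 0 < u
    · simp only [h0, true_and]
      exact Measurable.ite ((measurableSet_lt measurable_const hχ).inter
        (measurableSet_le hρ measurable_const)) measurable_const measurable_const
    · simp only [h0, false_and, if_false]
      exact measurable_const
  have hswap := lintegral_lintegral_swap (μ := m) (ν := (volume : Measure ℝ))
    (f := fun x u => ((if 0 < u ∧ u < φ x ∧ ψ x ≤ u then (1:ℝ≥0∞) else 0) +
        (if 0 < u ∧ u < ψ x ∧ φ x ≤ u then (1:ℝ≥0∞) else 0))) ?hmeas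
  case hmeas =>
    apply Measurable.aemeasurable
    have hs1 : MeasurableSet {q : ℝ × ℝ | 0 < q.2 ∧ q.2 < φ q.1 ∧ ψ q.1 ≤ q.2} := by
      refine (measurableSet_lt measurable_const measurable_snd).inter ?_
      exact (measurableSet_lt measurable_snd (hmφ.comp measurable_fst)).inter
        (measurableSet_le (hmψ.comp measurable_fst) measurable_snd)
    have hs2 : MeasurableSet {q : ℝ × ℝ | 0 < q.2 ∧ q.2 < ψ q.1 ∧ φ q.1 ≤ q.2} := by
      refine (measurableSet_lt measurable_const measurable_snd).inter ?_
      exact (measurableSet_lt measurable_snd (hmψ.comp measurable_fst)).inter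
        (measurableSet_le (hmφ.comp measurable_fst) measurable_snd)
    exact (Measurable.ite hs1 measurable_const measurable_const).add
      (Measurable.ite hs2 measurable_const measurable_const)
  calc ∫⁻ x, ENNReal.ofReal (|φ x - ψ x|) ∂m
      = ∫⁻ x, ∫⁻ u : ℝ, ((if 0 < u ∧ u < φ x ∧ ψ x ≤ u then (1:ℝ≥0∞) else 0) +
          (if 0 < u ∧ u < ψ x ∧ φ x ≤ u then (1:ℝ≥0∞) else 0)) ∂volume ∂m :=
        lintegral_congr fun x => layercake_one (hposφ x) (hposψ x)
    _ = ∫⁻ u : ℝ, ∫⁻ x, ((if 0 < u ∧ u < φ x ∧ ψ x ≤ u then (1:ℝ≥0∞) else 0) +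
          (if 0 < u ∧ u < ψ x ∧ φ x ≤ u then (1:ℝ≥0∞) else 0)) ∂m ∂volume := hswap
    _ = ∫⁻ u : ℝ, ((if 0 < u then m {x | u < φ x ∧ ψ x ≤ u} else 0) +
        (if 0 < u then m {x | u < ψ x ∧ φ x ≤ u} else 0)) := by
        apply lintegral_congr
        intro u
        have heval : ∀ (χ ρ : ℝ → ℝ), Measurable χ → Measurable ρ →
            (∫⁻ x, (if 0 < u ∧ u < χ x ∧ ρ x ≤ u then (1:ℝ≥0∞) else 0) ∂m) =
              if 0 < u then m {x | u < χ x ∧ ρ x ≤ u} else 0 := by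
          intro χ ρ hχ hρ
          by_cases h0 : 0 < u
          · simp only [h0, true_and, if_true]
            have hms : MeasurableSet {x | u < χ x ∧ ρ x ≤ u} :=
              (measurableSet_lt measurable_const hχ).inter
                (measurableSet_le hρ measurable_const)
            exact lint_ind m hms
          · simp only [h0, false_and, if_false, lintegral_zero]
        rw [lintegral_add_left (hcond φ ψ u hmφ hmψ), heval φ ψ hmφ hmψ, heval ψ φ hmψ hmφ]

end LayerOne



section LayerRpow

variable {p : ℝ}

noncomputable def ker (p : ℝ) (w : ℝ × ℝ) : ℝ≥0∞ :=
  ENNReal.ofReal (p * (p - 1) * (w.1 - w.2) ^ (p - 2))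

lemma ker_measurable (p : ℝ) : Measurable (ker p) :=
  (((measurable_fst.sub measurable_snd).pow_const (p - 2)).const_mul (p * (p - 1))).ennreal_ofReal

lemma Jmeasurable (p : ℝ) (a b : ℝ) :
    Measurable (fun w : ℝ × ℝ =>
      if 0 < w.2 ∧ w.2 < w.1 ∧ w.1 < a ∧ b ≤ w.2 then ker p w else 0) := by
  have hCset : MeasurableSet {w : ℝ × ℝ | 0 < w.2 ∧ w.2 < w.1 ∧ w.1 < a ∧ b ≤ w.2} := by
    refine (measurableSet_lt measurable_const measurable_snd).inter ?_
    refine (measurableSet_lt measurable_snd measurable_fst).inter ?_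
    exact (measurableSet_lt measurable_fst measurable_const).inter
      (measurableSet_le measurable_const measurable_snd)
  exact Measurable.ite hCset (ker_measurable p) measurable_const

lemma Jzero (p : ℝ) {a b : ℝ} (hab : a ≤ b) :
    (∫⁻ w : ℝ × ℝ, if 0 < w.2 ∧ w.2 < w.1 ∧ w.1 < a ∧ b ≤ w.2 then ker p w else 0) = 0 := by
  have hz : ∀ w : ℝ × ℝ,
      (if 0 < w.2 ∧ w.2 < w.1 ∧ w.1 < a ∧ b ≤ w.2 then ker p w else 0) = 0 := by
    intro w
    rw [if_neg]
    rintro ⟨_, h2, h3, h4⟩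
    have : w.2 < w.2 := h2.trans (h3.trans_le (hab.trans h4))
    exact absurd this (lt_irrefl _)
  simp only [hz, lintegral_zero]

lemma Jinner (hp : 1 < p) {a b : ℝ} (hb : 0 ≤ b) (u : ℝ) :
    (∫⁻ v : ℝ, if 0 < v ∧ v < u ∧ u < a ∧ b ≤ v then
        ENNReal.ofReal (p * (p - 1) * (u - v) ^ (p - 2)) else 0)
      = if b < u ∧ u < a then ENNReal.ofReal (p * (u - b) ^ (p - 1)) else 0 := by
  have hp2 : (-1 : ℝ) < p - 2 := by linarith
  by_cases hu : b < u ∧ u < a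
  · rw [if_pos hu]
    obtain ⟨hbu, hua⟩ := hu
    have hfun : (fun v : ℝ => if 0 < v ∧ v < u ∧ u < a ∧ b ≤ v then
        ENNReal.ofReal (p * (p - 1) * (u - v) ^ (p - 2)) else 0) =
        fun v => (Ioo 0 u ∩ Ici b).indicator
          (fun v => ENNReal.ofReal (p * (p - 1) * (u - v) ^ (p - 2))) v := by
      funext v
      by_cases hv : v ∈ Ioo 0 u ∩ Ici b
      · rw [indicator_of_mem hv, if_pos ⟨hv.1.1, hv.1.2, hua, hv.2⟩]
      · rw [indicator_of_notMem hv, if_neg (fun hc => hv ⟨⟨hc.1, hc.2.1⟩, hc.2.2.2⟩)]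
    rw [hfun, lintegral_indicator (measurableSet_Ioo.inter measurableSet_Ici)]
    have hae : (Ioo 0 u ∩ Ici b : Set ℝ) =ᵐ[volume] Ioo b u := by
      rcases eq_or_lt_of_le hb with hb0 | hb0
      · have h2 : Ioo (0:ℝ) u ∩ Ici b = Ioo b u := by
          rw [← hb0]
          exact inter_eq_left.2 fun x hx => hx.1.le
        rw [h2]; exact EventuallyEq.rfl
      · have h2 : Ioo (0:ℝ) u ∩ Ici b = Ico b u := by
          ext x
          simp only [mem_inter_iff, mem_Ioo, mem_Ici, mem_Ico]
          constructor
          · rintro ⟨⟨_, h2⟩, h3⟩; exact ⟨h3, h2⟩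
          · rintro ⟨h1, h2⟩; exact ⟨⟨lt_of_lt_of_le hb0 h1, h2⟩, h1⟩
        rw [h2]
        exact (Ioo_ae_eq_Ico (μ := (volume : Measure ℝ)) (a := b) (b := u)).symm
    rw [setLIntegral_congr hae]
    have h1 : IntervalIntegrable (fun x : ℝ => x ^ (p - 2)) volume 0 (u - b) :=
      intervalIntegral.intervalIntegrable_rpow' hp2
    have h2 := h1.comp_sub_left u
    simp only [sub_zero, sub_sub_cancel] at h2
    have h3 := (h2.symm.const_mul (p * (p - 1)))
    rw [intervalIntegrable_iff_integrableOn_Ioo_of_le hbu.le] at h3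
    have hnn : 0 ≤ᵐ[volume.restrict (Ioo b u)]
        fun v => p * (p - 1) * (u - v) ^ (p - 2) := by
      filter_upwards [ae_restrict_mem measurableSet_Ioo] with v hv
      have huv : (0:ℝ) ≤ u - v := by linarith [hv.2]
      have hpp : (0:ℝ) ≤ p * (p - 1) := by nlinarith
      exact mul_nonneg hpp (Real.rpow_nonneg huv _)
    rw [← ofReal_integral_eq_lintegral_ofReal h3 hnn]
    congr 1
    rw [← integral_Ioc_eq_integral_Ioo, ← intervalIntegral.integral_of_le hbu.le,
      intervalIntegral.integral_const_mul,
      intervalIntegral.integral_comp_sub_left (fun x : ℝ => x ^ (p - 2)) u,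
      sub_self, integral_rpow (Or.inl hp2)]
    have h20 : (0:ℝ) ^ (p - 2 + 1) = 0 := Real.zero_rpow (by intro h; linarith [h])
    rw [h20, sub_zero]
    have hexp : p - 2 + 1 = p - 1 := by ring
    rw [hexp]
    have hne : p - 1 ≠ 0 := by intro h; linarith [h]
    field_simp
  · rw [if_neg hu]
    have hz : ∀ v : ℝ, (if 0 < v ∧ v < u ∧ u < a ∧ b ≤ v then
        ENNReal.ofReal (p * (p - 1) * (u - v) ^ (p - 2)) else 0) = 0 := by
      intro v
      rw [if_neg]
      rintro ⟨_, h2, h3, h4⟩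
      exact hu ⟨lt_of_le_of_lt h4 h2, h3⟩
    simp only [hz, lintegral_zero]

lemma Jpos (hp : 1 < p) {a b : ℝ} (hb : 0 ≤ b) (hba : b < a) :
    (∫⁻ w : ℝ × ℝ, if 0 < w.2 ∧ w.2 < w.1 ∧ w.1 < a ∧ b ≤ w.2 then ker p w else 0)
      = ENNReal.ofReal ((a - b) ^ p) := by
  rw [Measure.volume_eq_prod, lintegral_prod _ ((Jmeasurable p a b).aemeasurable)]
  calc ∫⁻ u : ℝ, ∫⁻ v : ℝ, (if 0 < v ∧ v < u ∧ u < a ∧ b ≤ v then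
          ENNReal.ofReal (p * (p - 1) * (u - v) ^ (p - 2)) else 0)
      = ∫⁻ u : ℝ, (if b < u ∧ u < a then ENNReal.ofReal (p * (u - b) ^ (p - 1)) else 0) :=
        lintegral_congr fun u => Jinner hp hb u
    _ = ENNReal.ofReal ((a - b) ^ p) := by
        have hfun : (fun u : ℝ => if b < u ∧ u < a then
            ENNReal.ofReal (p * (u - b) ^ (p - 1)) else 0) =
            fun u => (Ioo b a).indicator
              (fun u => ENNReal.ofReal (p * (u - b) ^ (p - 1))) u := by
          funext u
          by_cases hu : u ∈ Ioo b a
          · rw [indicator_of_mem hu, if_pos ⟨hu.1, hu.2⟩]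
          · rw [indicator_of_notMem hu, if_neg (fun hc => hu ⟨hc.1, hc.2⟩)]
        rw [hfun, lintegral_indicator measurableSet_Ioo]
        have h1 : IntervalIntegrable (fun x : ℝ => x ^ (p - 1)) volume 0 (a - b) :=
          intervalIntegral.intervalIntegrable_rpow' (by linarith)
        have h2 := h1.comp_sub_right b
        simp only [zero_add, sub_add_cancel] at h2
        have h3 := h2.const_mul p
        rw [intervalIntegrable_iff_integrableOn_Ioo_of_le hba.le] at h3
        have hnn : 0 ≤ᵐ[volume.restrict (Ioo b a)]
            fun u => p * (u - b) ^ (p - 1) := by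
          filter_upwards [ae_restrict_mem measurableSet_Ioo] with u hu
          have hub : (0:ℝ) ≤ u - b := by linarith [hu.1]
          exact mul_nonneg (by linarith) (Real.rpow_nonneg hub _)
        rw [← ofReal_integral_eq_lintegral_ofReal h3 hnn]
        congr 1
        rw [← integral_Ioc_eq_integral_Ioo, ← intervalIntegral.integral_of_le hba.le,
          intervalIntegral.integral_const_mul,
          intervalIntegral.integral_comp_sub_right (fun x : ℝ => x ^ (p - 1)) b,
          sub_self, integral_rpow (Or.inl (by linarith))]
        have h20 : (0:ℝ) ^ (p - 1 + 1) = 0 := Real.zero_rpow (by intro h; linarith [h])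
        rw [h20, sub_zero]
        have hexp : p - 1 + 1 = p := by ring
        rw [hexp]
        have hne : p ≠ 0 := by intro h; linarith [h]
        field_simp

lemma layercake_rpow (hp : 1 < p) {a b : ℝ} (ha : 0 ≤ a) (hb : 0 ≤ b) :
    ENNReal.ofReal (|a - b| ^ p) =
      ∫⁻ w : ℝ × ℝ, ((if 0 < w.2 ∧ w.2 < w.1 ∧ w.1 < a ∧ b ≤ w.2 then ker p w else 0) +
        (if 0 < w.2 ∧ w.2 < w.1 ∧ w.1 < b ∧ a ≤ w.2 then ker p w else 0)) := by
  rw [lintegral_add_left (Jmeasurable p a b)]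
  rcases lt_trichotomy a b with h | h | h
  · rw [Jzero p h.le, Jpos hp ha h, zero_add, abs_sub_comm,
      abs_of_nonneg (sub_nonneg.2 h.le)]
  · subst h
    rw [Jzero p le_rfl, zero_add, sub_self, abs_zero, Real.zero_rpow (by intro hc; linarith),
      ENNReal.ofReal_zero]
  · rw [Jpos hp hb h, Jzero p h.le, add_zero, abs_of_nonneg (sub_nonneg.2 h.le)]

lemma expand_rpow (m : Measure ℝ) [SigmaFinite m] (hp : 1 < p) {φ ψ : ℝ → ℝ}
    (hmφ : Measurable φ) (hmψ : Measurable ψ)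
    (hposφ : ∀ x, 0 ≤ φ x) (hposψ : ∀ x, 0 ≤ ψ x) :
    ∫⁻ x, ENNReal.ofReal (|φ x - ψ x| ^ p) ∂m =
      ∫⁻ w : ℝ × ℝ, ((if 0 < w.2 ∧ w.2 < w.1 then
          ker p w * m {x | w.1 < φ x ∧ ψ x ≤ w.2} else 0) +
        (if 0 < w.2 ∧ w.2 < w.1 then
          ker p w * m {x | w.1 < ψ x ∧ φ x ≤ w.2} else 0)) := by
  have hcond : ∀ (χ ρ : ℝ → ℝ), Measurable χ → Measurable ρ →
      Measurable (fun q : ℝ × (ℝ × ℝ) =>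
        if 0 < q.2.2 ∧ q.2.2 < q.2.1 ∧ q.2.1 < χ q.1 ∧ ρ q.1 ≤ q.2.2 then ker p q.2 else 0) := by
    intro χ ρ hχ hρ
    have hs : MeasurableSet {q : ℝ × (ℝ × ℝ) |
        0 < q.2.2 ∧ q.2.2 < q.2.1 ∧ q.2.1 < χ q.1 ∧ ρ q.1 ≤ q.2.2} := by
      refine (measurableSet_lt measurable_const (measurable_snd.comp measurable_snd)).inter ?_
      refine (measurableSet_lt (measurable_snd.comp measurable_snd)
        (measurable_fst.comp measurable_snd)).inter ?_
      exact (measurableSet_lt (measurable_fst.comp measurable_snd)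
        (hχ.comp measurable_fst)).inter
        (measurableSet_le (hρ.comp measurable_fst) (measurable_snd.comp measurable_snd))
    exact Measurable.ite hs ((ker_measurable p).comp measurable_snd) measurable_const
  have hswap := lintegral_lintegral_swap (μ := m) (ν := (volume : Measure (ℝ × ℝ)))
    (f := fun x w => ((if 0 < w.2 ∧ w.2 < w.1 ∧ w.1 < φ x ∧ ψ x ≤ w.2 then ker p w else 0) +
      (if 0 < w.2 ∧ w.2 < w.1 ∧ w.1 < ψ x ∧ φ x ≤ w.2 then ker p w else 0)))
    (((hcond φ ψ hmφ hmψ).add (hcond ψ φ hmψ hmφ)).aemeasurable)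
  calc ∫⁻ x, ENNReal.ofReal (|φ x - ψ x| ^ p) ∂m
      = ∫⁻ x, ∫⁻ w : ℝ × ℝ, ((if 0 < w.2 ∧ w.2 < w.1 ∧ w.1 < φ x ∧ ψ x ≤ w.2 then
            ker p w else 0) +
          (if 0 < w.2 ∧ w.2 < w.1 ∧ w.1 < ψ x ∧ φ x ≤ w.2 then ker p w else 0))
          ∂volume ∂m :=
        lintegral_congr fun x => layercake_rpow hp (hposφ x) (hposψ x)
    _ = ∫⁻ w : ℝ × ℝ, ∫⁻ x, ((if 0 < w.2 ∧ w.2 < w.1 ∧ w.1 < φ x ∧ ψ x ≤ w.2 then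
            ker p w else 0) +
          (if 0 < w.2 ∧ w.2 < w.1 ∧ w.1 < ψ x ∧ φ x ≤ w.2 then ker p w else 0))
          ∂m ∂volume := hswap
    _ = ∫⁻ w : ℝ × ℝ, ((if 0 < w.2 ∧ w.2 < w.1 then
          ker p w * m {x | w.1 < φ x ∧ ψ x ≤ w.2} else 0) +
        (if 0 < w.2 ∧ w.2 < w.1 then
          ker p w * m {x | w.1 < ψ x ∧ φ x ≤ w.2} else 0)) := by
        apply lintegral_congr
        intro w
        have heval : ∀ (χ ρ : ℝ → ℝ), Measurable χ → Measurable ρ →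
            (∫⁻ x, (if 0 < w.2 ∧ w.2 < w.1 ∧ w.1 < χ x ∧ ρ x ≤ w.2 then ker p w else 0) ∂m) =
              if 0 < w.2 ∧ w.2 < w.1 then ker p w * m {x | w.1 < χ x ∧ ρ x ≤ w.2} else 0 := by
          intro χ ρ hχ hρ
          by_cases hS : 0 < w.2 ∧ w.2 < w.1
          · rw [if_pos hS]
            have hfun : (fun x => if 0 < w.2 ∧ w.2 < w.1 ∧ w.1 < χ x ∧ ρ x ≤ w.2 then
                ker p w else 0) =
                fun x => ker p w * (if w.1 < χ x ∧ ρ x ≤ w.2 then 1 else 0) := by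
              funext x
              by_cases hx : w.1 < χ x ∧ ρ x ≤ w.2
              · rw [if_pos ⟨hS.1, hS.2, hx.1, hx.2⟩, if_pos hx, mul_one]
              · rw [if_neg (fun hc => hx ⟨hc.2.2.1, hc.2.2.2⟩), if_neg hx, mul_zero]
            rw [hfun, lintegral_const_mul _ (by
              exact Measurable.ite ((measurableSet_lt measurable_const hχ).inter
                (measurableSet_le hρ measurable_const)) measurable_const measurable_const)]
            congr 1
            exact lint_ind m ((measurableSet_lt measurable_const hχ).inter
              (measurableSet_le hρ measurable_const))
          · rw [if_neg hS]
            have hz : ∀ x : ℝ, (if 0 < w.2 ∧ w.2 < w.1 ∧ w.1 < χ x ∧ ρ x ≤ w.2 then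
                ker p w else 0) = 0 := by
              intro x
              rw [if_neg]
              rintro ⟨h1, h2, _, _⟩
              exact hS ⟨h1, h2⟩
            simp only [hz, lintegral_zero]
        have hm1 : Measurable (fun x =>
            if 0 < w.2 ∧ w.2 < w.1 ∧ w.1 < φ x ∧ ψ x ≤ w.2 then ker p w else 0) := by
          by_cases hS : 0 < w.2 ∧ w.2 < w.1
          · have heq : (fun x =>
                if 0 < w.2 ∧ w.2 < w.1 ∧ w.1 < φ x ∧ ψ x ≤ w.2 then ker p w else 0) =
                fun x => if w.1 < φ x ∧ ψ x ≤ w.2 then ker p w else 0 := by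
              funext x
              by_cases hx : w.1 < φ x ∧ ψ x ≤ w.2
              · rw [if_pos ⟨hS.1, hS.2, hx.1, hx.2⟩, if_pos hx]
              · rw [if_neg (fun hc => hx ⟨hc.2.2.1, hc.2.2.2⟩), if_neg hx]
            rw [heq]
            exact Measurable.ite ((measurableSet_lt measurable_const hmφ).inter
              (measurableSet_le hmψ measurable_const)) measurable_const measurable_const
          · have heq : (fun x =>
                if 0 < w.2 ∧ w.2 < w.1 ∧ w.1 < φ x ∧ ψ x ≤ w.2 then ker p w else 0) =
                fun _ => (0:ℝ≥0∞) :=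
              funext fun x => if_neg (fun hc => hS ⟨hc.1, hc.2.1⟩)
            rw [heq]
            exact measurable_const
        rw [lintegral_add_left hm1, heval φ ψ hmφ hmψ, heval ψ φ hmψ hmφ]

end LayerRpow

section Main

lemma restrict_set_eq {φ ψ : ℝ → ℝ} {u v : ℝ}
    (hmφ : Measurable φ) (hmψ : Measurable ψ)
    (hposφ : ∀ x, 0 ≤ φ x) (hposψ : ∀ x, 0 ≤ ψ x)
    (hfinφ : ∀ y, 0 < y → distf φ y < ⊤) (hfinψ : ∀ y, 0 < y → distf ψ y < ⊤) :
    (volume.restrict (Ioi (0:ℝ)))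
        {t | u < (Ioi (0:ℝ)).indicator (rearr φ) t ∧ (Ioi (0:ℝ)).indicator (rearr ψ) t ≤ v}
      = volume {t | t ∈ Ioi (0:ℝ) ∧ (u < rearr φ t ∧ rearr ψ t ≤ v)} := by
  have hmF := rearr_indicator_measurable hmφ hposφ hfinφ
  have hmG := rearr_indicator_measurable hmψ hposψ hfinψ
  have hms : MeasurableSet {t | u < (Ioi (0:ℝ)).indicator (rearr φ) t ∧
      (Ioi (0:ℝ)).indicator (rearr ψ) t ≤ v} := by
    rw [Set.setOf_and]
    exact (measurableSet_lt measurable_const hmF).inter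
      (measurableSet_le hmG measurable_const)
  rw [Measure.restrict_apply hms]
  congr 1
  ext t
  simp only [mem_inter_iff, mem_setOf_eq]
  by_cases ht : t ∈ Ioi (0:ℝ)
  · rw [indicator_of_mem ht, indicator_of_mem ht]
    tauto
  · rw [indicator_of_notMem ht, indicator_of_notMem ht]
    tauto

lemma main_ineq (p : ℝ) (hp : 1 ≤ p) (φ ψ : ℝ → ℝ)
    (hmφ : Measurable φ) (hmψ : Measurable ψ)
    (hposφ : ∀ x, 0 ≤ φ x) (hposψ : ∀ x, 0 ≤ ψ x)
    (hfinφ : ∀ y, 0 < y → distf φ y < ⊤) (hfinψ : ∀ y, 0 < y → distf ψ y < ⊤) :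
    (∫⁻ t in Ioi (0:ℝ), ENNReal.ofReal (|rearr φ t - rearr ψ t| ^ p))
      ≤ ∫⁻ x, ENNReal.ofReal (|φ x - ψ x| ^ p) := by
  rcases eq_or_ne (Tinf φ) (Tinf ψ) with hT | hT
  swap
  · -- degenerate case : RHS is infinite
    rcases hT.lt_or_gt with h | h
    · have := degen_top hp hmψ hmφ h
      have h2 : ∫⁻ x, ENNReal.ofReal (|φ x - ψ x| ^ p) = ⊤ := by
        rw [← this]
        apply lintegral_congr
        intro x
        rw [abs_sub_comm]
      rw [h2]
      exact le_top
    · rw [degen_top hp hmφ hmψ h]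
      exact le_top
  -- non-degenerate case
  have hmF := rearr_indicator_measurable hmφ hposφ hfinφ
  have hmG := rearr_indicator_measurable hmψ hposψ hfinψ
  have hposF : ∀ t, 0 ≤ (Ioi (0:ℝ)).indicator (rearr φ) t :=
    fun t => indicator_nonneg (fun x _ => rearr_nonneg hposφ x) t
  have hposG : ∀ t, 0 ≤ (Ioi (0:ℝ)).indicator (rearr ψ) t :=
    fun t => indicator_nonneg (fun x _ => rearr_nonneg hposψ x) t
  have hLHS : (∫⁻ t in Ioi (0:ℝ), ENNReal.ofReal (|rearr φ t - rearr ψ t| ^ p))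
      = ∫⁻ t, ENNReal.ofReal
          (|(Ioi (0:ℝ)).indicator (rearr φ) t - (Ioi (0:ℝ)).indicator (rearr ψ) t| ^ p)
        ∂(volume.restrict (Ioi (0:ℝ))) := by
    apply setLIntegral_congr_fun measurableSet_Ioi
    intro t ht
    beta_reduce
    rw [indicator_of_mem ht, indicator_of_mem ht]
  rw [hLHS]
  rcases hp.eq_or_lt with hp1 | hp1
  · -- p = 1
    subst hp1
    simp_rw [Real.rpow_one]
    rw [expand_one (volume.restrict (Ioi (0:ℝ))) hmF hmG hposF hposG,
      expand_one volume hmφ hmψ hposφ hposψ]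
    apply lintegral_mono
    intro u
    by_cases hu : 0 < u
    · simp only [hu, if_true]
      apply add_le_add
      · rw [restrict_set_eq hmφ hmψ hposφ hposψ hfinφ hfinψ]
        exact crux hmφ hmψ hposφ hposψ hfinφ hfinψ hT hu le_rfl
      · rw [restrict_set_eq hmψ hmφ hposψ hposφ hfinψ hfinφ]
        exact crux hmψ hmφ hposψ hposφ hfinψ hfinφ hT.symm hu le_rfl
    · simp only [hu, if_false, add_zero, le_refl]
  · -- p > 1
    rw [expand_rpow (volume.restrict (Ioi (0:ℝ))) hp1 hmF hmG hposF hposG,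
      expand_rpow volume hp1 hmφ hmψ hposφ hposψ]
    apply lintegral_mono
    intro w
    by_cases hS : 0 < w.2 ∧ w.2 < w.1
    · simp only [hS, if_true]
      apply add_le_add
      · rw [restrict_set_eq hmφ hmψ hposφ hposψ hfinφ hfinψ]
        exact mul_le_mul_right (crux hmφ hmψ hposφ hposψ hfinφ hfinψ hT hS.1 hS.2.le) _
      · rw [restrict_set_eq hmψ hmφ hposψ hposφ hfinψ hfinφ]
        exact mul_le_mul_right (crux hmψ hmφ hposψ hposφ hfinψ hfinφ hT.symm hS.1 hS.2.le) _
    · simp only [hS, if_false, add_zero, le_refl]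

end Main

end Stmt17

open MeasureTheory

/-- The left-continuous nonincreasing rearrangement of a complex-valued function on ℝ:
f*(t) = sup_{|E|=t} inf_{x∈E} |f(x)|. -/
noncomputable def rearrC (f : ℝ → ℂ) (t : ℝ) : ℝ :=
  sSup {y : ℝ | ∃ E : Set ℝ, volume E = ENNReal.ofReal t ∧ y = ⨅ x : E, ‖f x.1‖}

/-- Nonexpansivity of the nonincreasing rearrangement in L^p:
∫_0^∞ |f*(t) − g*(t)|^p dt ≤ ∫_ℝ |f(x) − g(x)|^p dx. -/
theorem stmt17 (p : ℝ) (hp : 1 ≤ p) (f g : ℝ → ℂ)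
    (hfmeas : Measurable f) (hgmeas : Measurable g)
    (hf : ∀ y : ℝ, 0 < y → volume {x : ℝ | y < ‖f x‖} < ⊤)
    (hg : ∀ y : ℝ, 0 < y → volume {x : ℝ | y < ‖g x‖} < ⊤) :
    (∫⁻ t in Set.Ioi (0:ℝ), ENNReal.ofReal (|rearrC f t - rearrC g t| ^ p))
      ≤ ∫⁻ x : ℝ, ENNReal.ofReal (‖f x - g x‖ ^ p) := by
  have hmφ : Measurable (fun x => ‖f x‖) :=
    hfmeas.norm
  have hmψ : Measurable (fun x => ‖g x‖) :=
    hgmeas.norm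
  have hposφ : ∀ x, 0 ≤ ‖f x‖ := fun x => (norm_nonneg _)
  have hposψ : ∀ x, 0 ≤ ‖g x‖ := fun x => (norm_nonneg _)
  have hrearrf : rearrC f = Stmt17.rearr (fun x => ‖f x‖) := rfl
  have hrearrg : rearrC g = Stmt17.rearr (fun x => ‖g x‖) := rfl
  have hfinφ : ∀ y, 0 < y → Stmt17.distf (fun x => ‖f x‖) y < ⊤ := hf
  have hfinψ : ∀ y, 0 < y → Stmt17.distf (fun x => ‖g x‖) y < ⊤ := hg
  have hmain := Stmt17.main_ineq p hp _ _ hmφ hmψ hposφ hposψ hfinφ hfinψ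
  rw [hrearrf, hrearrg]
  refine hmain.trans (lintegral_mono fun x => ?_)
  apply ENNReal.ofReal_le_ofReal
  apply Real.rpow_le_rpow (abs_nonneg _) _ (by linarith)
  exact abs_norm_sub_norm_le _ _
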